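/- Let f : X → ℝ be differentiable and μ-gradient dominated of order p, and X_t a curve satisfying (d/dt) f(X_t) ≤ -‖∇f(X_t)‖^{p/(p-1)}. Then f(X_t) - f(x*) ≤ (f(X_0) - f(x*)) · exp(-(p/(p-1)) μ^{1/(p-1)} t) for all t ≥ 0. -/

import Mathlib

open Real

theorem descent_flow_gradient_dominated_rate
    {E : Type*} [NormedAddCommGroup E] [InnerProductSpace ℝ E] [FiniteDimensional ℝ E]
    (f : E → ℝ) (hf : Differentiable ℝ f)
    (xstar : E) (hmin : ∀ y, f xstar ≤ f y)
    (p μ : ℝ) (hp : 1 < p) (hμ : 0 < μ)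
    (hdom : ∀ z : E, μ ^ (1 / (p - 1)) * (f z - f xstar) ≤
      (p - 1) / p * ‖gradient f z‖ ^ (p / (p - 1)))
    (C : ℝ → E) (d : ℝ → ℝ)
    (hderiv : ∀ t ≥ (0 : ℝ), HasDerivAt (fun s => f (C s)) (d t) t)
    (hdecay : ∀ t ≥ (0 : ℝ), d t ≤ -‖gradient f (C t)‖ ^ (p / (p - 1))) :
    ∀ t ≥ (0 : ℝ), f (C t) - f xstar ≤
      (f (C 0) - f xstar) * Real.exp (-(p / (p - 1) * μ ^ (1 / (p - 1)) * t)) := by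
  intro t ht
  set K : ℝ := p / (p - 1) * μ ^ (1 / (p - 1)) with hK
  have hp1 : (0:ℝ) < p - 1 := by linarith
  have hpp : (0:ℝ) < p / (p - 1) := div_pos (by linarith) hp1
  set h : ℝ → ℝ := fun s => (f (C s) - f xstar) * Real.exp (K * s) with hh
  have hderh : ∀ s ≥ (0:ℝ), HasDerivAt h
      (d s * Real.exp (K * s) + (f (C s) - f xstar) * (Real.exp (K * s) * K)) s := by
    intro s hs
    have := ((hderiv s hs).sub_const (f xstar)).mul (((hasDerivAt_id s).const_mul K).exp)
    simp at this
    exact this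
  have hmono : AntitoneOn h (Set.Ici (0:ℝ)) := by
    apply antitoneOn_of_deriv_nonpos (convex_Ici 0)
    · exact fun s hs => ((hderh s hs).continuousAt).continuousWithinAt
    · intro s hs
      rw [interior_Ici] at hs
      exact ((hderh s (le_of_lt hs)).differentiableAt).differentiableWithinAt
    · intro s hs
      rw [interior_Ici] at hs
      rw [(hderh s (le_of_lt hs)).deriv]
      have he : (0:ℝ) < Real.exp (K * s) := Real.exp_pos _
      have h1 : d s ≤ -‖gradient f (C s)‖ ^ (p / (p - 1)) := hdecay s hs.le
      have h2 : K * (f (C s) - f xstar) ≤ ‖gradient f (C s)‖ ^ (p / (p - 1)) := by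
        have := hdom (C s)
        calc K * (f (C s) - f xstar)
            = p / (p - 1) * (μ ^ (1 / (p - 1)) * (f (C s) - f xstar)) := by ring
          _ ≤ p / (p - 1) * ((p - 1) / p * ‖gradient f (C s)‖ ^ (p / (p - 1))) :=
              mul_le_mul_of_nonneg_left this hpp.le
          _ = ‖gradient f (C s)‖ ^ (p / (p - 1)) := by
              field_simp
      nlinarith [mul_le_mul_of_nonneg_right (add_le_add h1 h2) he.le]
  have hle : h t ≤ h 0 := hmono (Set.mem_Ici.mpr le_rfl) ht ht
  have h0 : h 0 = f (C 0) - f xstar := by simp [hh]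
  rw [h0] at hle
  have he : (0:ℝ) < Real.exp (K * t) := Real.exp_pos _
  have : f (C t) - f xstar ≤ (f (C 0) - f xstar) / Real.exp (K * t) :=
    (le_div_iff₀ he).mpr hle
  calc f (C t) - f xstar ≤ (f (C 0) - f xstar) / Real.exp (K * t) := this
    _ = (f (C 0) - f xstar) * Real.exp (-(K * t)) := by
        rw [Real.exp_neg]; ring
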